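/- Let n, n₁, n₂, k₁, k₂, e, t, a be integers with n = n₁+n₂, k₂ ≥ 2, e ≥ 1, t ≥ 0, n₂ > k₂ ≥ 1, n ≥ k₂(k₁+1), and k₂(a+1) - n₂ ≥ (k₂² - 1 - k₂e)/n₂ (the Brill-Noether bound for (n₂, n₂a+e, k₂)). Then C₂₁ = n₁(k₂(a+1) - n₂) + e(n-k₂) + t(n₂-k₂) - k₁k₂ > 0. -/
import Mathlib


/-- case (i) of Lemma 5.6: if k₂ ≥ 2, e ≥ 1, t ≥ 0, n₂ > k₂,
n ≥ k₂(k₁+1) and the Brill-Noether bound holds, then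
C₂₁ = n₁(k₂(a+1)-n₂) + e(n-k₂) + t(n₂-k₂) - k₁k₂ > 0. -/
theorem stmt_18 (n n₁ n₂ k₁ k₂ e t a : ℤ) (hn : n = n₁ + n₂) (hn₁ : 1 ≤ n₁)
    (hk₂2 : 2 ≤ k₂) (he : 1 ≤ e) (ht : 0 ≤ t) (hk₂n₂ : k₂ < n₂) (hk₂1 : 1 ≤ k₂)
    (hnk : k₂ * (k₁ + 1) ≤ n)
    (hbn : ((k₂ : ℚ) ^ 2 - 1 - k₂ * e) / n₂ ≤ ((k₂ * (a + 1) - n₂ : ℤ) : ℚ)) :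
    0 < n₁ * (k₂ * (a + 1) - n₂) + e * (n - k₂) + t * (n₂ - k₂) - k₁ * k₂ := by
  have hn₂ : (0:ℤ) < n₂ := lt_trans (by linarith) hk₂n₂
  have hn₂q : (0:ℚ) < (n₂:ℚ) := by exact_mod_cast hn₂
  have h1 : (k₂:ℚ) ^ 2 - 1 - k₂ * e ≤ (n₂:ℚ) * ((k₂ * (a + 1) - n₂ : ℤ) : ℚ) := by
    rw [div_le_iff₀ hn₂q] at hbn; linarith
  have h2 : k₂ ^ 2 - 1 - k₂ * e ≤ n₂ * (k₂ * (a + 1) - n₂) := by exact_mod_cast h1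
  have h7 : n₁ * (k₂ ^ 2 - 1 - k₂ * e) ≤ n₁ * (n₂ * (k₂ * (a + 1) - n₂)) :=
    mul_le_mul_of_nonneg_left h2 (by linarith)
  have h3 : 0 ≤ (e - 1) * (n₂ * (n - k₂) - k₂ * n₁) := by
    apply mul_nonneg (by linarith)
    nlinarith [mul_le_mul (le_of_lt hk₂n₂) (by linarith : n₁ ≤ n - k₂) (by linarith) (by linarith : (0:ℤ) ≤ n₂)]
  have h4 : 0 ≤ n₂ * (n - k₂ - k₁ * k₂) := mul_nonneg (by linarith) (by linarith)
  have h5 : 0 ≤ n₂ * (t * (n₂ - k₂)) :=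
    mul_nonneg (by linarith) (mul_nonneg ht (by linarith))
  have h6 : 0 < n₁ * (k₂ ^ 2 - k₂ - 1) := mul_pos (by linarith) (by nlinarith)
  have key : 0 < n₂ * (n₁ * (k₂ * (a + 1) - n₂) + e * (n - k₂) + t * (n₂ - k₂) - k₁ * k₂) := by
    nlinarith [h3, h4, h5, h6, h7]
  by_contra hc
  push_neg at hc
  exact absurd key (not_lt.2 (mul_nonpos_of_nonneg_of_nonpos (by linarith) hc))
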